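/- Let K be a field of characteristic zero and let a be a finite-dimensional Lie algebra over K. Then a admits an invertible derivation if and only if there exist a quadratic symplectic Lie algebra (g,B,ω) over K and an ideal I of g such that B(I,I) = {0} (I is completely isotropic for B), I = {x ∈ g : ω(x,u) = 0 for all u ∈ I} (I is lagrangian for ω), and a is isomorphic as a Lie algebra to the quotient g/I. -/

import Mathlib

universe u v

section Tstar

variable (K : Type u) [Field K] (a : Type v) [LieRing a] [LieAlgebra K a]

/-- Semidirect product `a ⋉ a*` (coadjoint action), as a type synonym. -/
def Tsd : Type (max u v) := a × Module.Dual K a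

namespace Tsd

instance : AddCommGroup (Tsd K a) := inferInstanceAs (AddCommGroup (a × Module.Dual K a))
instance : Module K (Tsd K a) := inferInstanceAs (Module K (a × Module.Dual K a))

variable {K a}

/-- Build an element of the type synonym. -/
def mk (x : a) (f : Module.Dual K a) : Tsd K a := (x, f)

/-- First component. -/
def pr1 (p : Tsd K a) : a := p.1
/-- Second component. -/
def pr2 (p : Tsd K a) : Module.Dual K a := p.2

@[simp] lemma pr1_mk (x : a) (f : Module.Dual K a) : pr1 (mk x f) = x := rfl
@[simp] lemma mk_fst (x : a) (f : Module.Dual K a) : (mk x f).1 = x := rfl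
@[simp] lemma mk_snd (x : a) (f : Module.Dual K a) : (mk x f).2 = f := rfl
@[simp] lemma pr2_mk (x : a) (f : Module.Dual K a) : pr2 (mk x f) = f := rfl
@[simp] lemma pr1_add (p q : Tsd K a) : pr1 (p + q) = pr1 p + pr1 q := rfl
@[simp] lemma pr2_add (p q : Tsd K a) : pr2 (p + q) = pr2 p + pr2 q := rfl
@[simp] lemma pr1_smul (t : K) (p : Tsd K a) : pr1 (t • p) = t • pr1 p := rfl
@[simp] lemma pr2_smul (t : K) (p : Tsd K a) : pr2 (t • p) = t • pr2 p := rfl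
@[simp] lemma pr1_sub (p q : Tsd K a) : pr1 (p - q) = pr1 p - pr1 q := rfl
@[simp] lemma pr2_sub (p q : Tsd K a) : pr2 (p - q) = pr2 p - pr2 q := rfl
@[simp] lemma pr1_neg (p : Tsd K a) : pr1 (-p) = -pr1 p := rfl
@[simp] lemma pr2_neg (p : Tsd K a) : pr2 (-p) = -pr2 p := rfl
@[simp] lemma pr1_zero : pr1 (0 : Tsd K a) = 0 := rfl
@[simp] lemma pr2_zero : pr2 (0 : Tsd K a) = 0 := rfl

lemma ext' {p q : Tsd K a} (h1 : pr1 p = pr1 q) (h2 : pr2 p = pr2 q) : p = q :=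
  Prod.ext h1 h2

/-- Coadjoint action. -/
def cw (x : a) (f : Module.Dual K a) : Module.Dual K a :=
  -(f ∘ₗ (LieAlgebra.ad K a x))

@[simp] lemma cw_apply (x : a) (f : Module.Dual K a) (w : a) :
    cw x f w = -f ⁅x, w⁆ := rfl

instance : LieRing (Tsd K a) where
  bracket p q := mk ⁅pr1 p, pr1 q⁆ (cw (pr1 p) (pr2 q) - cw (pr1 q) (pr2 p))
  add_lie p q r := by
    refine ext' ?_ ?_
    · show ⁅pr1 p + pr1 q, pr1 r⁆ = ⁅pr1 p, pr1 r⁆ + ⁅pr1 q, pr1 r⁆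
      rw [add_lie]
    · show cw (pr1 p + pr1 q) (pr2 r) - cw (pr1 r) (pr2 p + pr2 q) = _
      refine LinearMap.ext fun w => ?_
      show _ = (_ + _ : Module.Dual K a) w
      simp only [mk_snd, LinearMap.sub_apply, LinearMap.add_apply, cw_apply, add_lie, map_add]
      abel
  lie_add p q r := by
    refine ext' ?_ ?_
    · show ⁅pr1 p, pr1 q + pr1 r⁆ = ⁅pr1 p, pr1 q⁆ + ⁅pr1 p, pr1 r⁆
      rw [lie_add]
    · show cw (pr1 p) (pr2 q + pr2 r) - cw (pr1 q + pr1 r) (pr2 p) = _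
      refine LinearMap.ext fun w => ?_
      show _ = (_ + _ : Module.Dual K a) w
      simp only [mk_snd, LinearMap.sub_apply, LinearMap.add_apply, cw_apply, add_lie, map_add]
      abel
  lie_self p := by
    refine ext' ?_ ?_
    · show ⁅pr1 p, pr1 p⁆ = 0
      exact lie_self _
    · show cw (pr1 p) (pr2 p) - cw (pr1 p) (pr2 p) = 0
      simp
  leibniz_lie p q r := by
    refine ext' ?_ ?_
    · show ⁅pr1 p, ⁅pr1 q, pr1 r⁆⁆ = ⁅⁅pr1 p, pr1 q⁆, pr1 r⁆ + ⁅pr1 q, ⁅pr1 p, pr1 r⁆⁆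
      exact leibniz_lie _ _ _
    · show cw (pr1 p) (cw (pr1 q) (pr2 r) - cw (pr1 r) (pr2 q)) - cw ⁅pr1 q, pr1 r⁆ (pr2 p) = _
      refine LinearMap.ext fun w => ?_
      show _ = (_ + _ : Module.Dual K a) w
      show _ = ((cw ⁅pr1 p, pr1 q⁆ (pr2 r) - cw (pr1 r) (cw (pr1 p) (pr2 q) - cw (pr1 q) (pr2 p)))
        + (cw (pr1 q) (cw (pr1 p) (pr2 r) - cw (pr1 r) (pr2 p)) - cw ⁅pr1 p, pr1 r⁆ (pr2 q))) w
      simp only [LinearMap.sub_apply, LinearMap.add_apply, cw_apply, map_neg, map_sub, lie_lie,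
        map_add, neg_neg, neg_sub]
      abel

@[simp] lemma bracket_def (p q : Tsd K a) :
    ⁅p, q⁆ = mk ⁅pr1 p, pr1 q⁆ (cw (pr1 p) (pr2 q) - cw (pr1 q) (pr2 p)) := rfl

instance : LieAlgebra K (Tsd K a) where
  lie_smul t p q := by
    refine ext' ?_ ?_
    · show ⁅pr1 p, t • pr1 q⁆ = t • ⁅pr1 p, pr1 q⁆
      rw [lie_smul]
    · show cw (pr1 p) (t • pr2 q) - cw (t • pr1 q) (pr2 p) = t • _
      refine LinearMap.ext fun w => ?_
      simp [mk_snd, smul_lie, mul_comm, mul_sub]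
      ring

instance [Module.Finite K a] : Module.Finite K (Tsd K a) :=
  inferInstanceAs (Module.Finite K (a × Module.Dual K a))

end Tsd

end Tstar

namespace Tsd

variable {K : Type u} [Field K] {a : Type v} [LieRing a] [LieAlgebra K a]

/-- The hyperbolic invariant scalar product on `a ⋉ a*`. -/
def Bform : LinearMap.BilinForm K (Tsd K a) :=
  LinearMap.mk₂ K (fun p q => pr2 p (pr1 q) + pr2 q (pr1 p))
    (fun p p' q => by simp; ring)
    (fun t p q => by simp; ring)
    (fun p q q' => by simp; ring)
    (fun t p q => by simp; ring)

@[simp] lemma Bform_apply (p q : Tsd K a) :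
    (Bform : LinearMap.BilinForm K (Tsd K a)) p q = pr2 p (pr1 q) + pr2 q (pr1 p) := rfl

/-- The symplectic form on `a ⋉ a*` attached to a derivation `D`. -/
def ωform (D : a →ₗ[K] a) : LinearMap.BilinForm K (Tsd K a) :=
  LinearMap.mk₂ K (fun p q => pr2 p (D (pr1 q)) - pr2 q (D (pr1 p)))
    (fun p p' q => by simp; ring)
    (fun t p q => by simp; ring)
    (fun p q q' => by simp; ring)
    (fun t p q => by simp; ring)

@[simp] lemma ωform_apply (D : a →ₗ[K] a) (p q : Tsd K a) :
    (ωform D : LinearMap.BilinForm K (Tsd K a)) p q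
      = pr2 p (D (pr1 q)) - pr2 q (D (pr1 p)) := rfl

/-- The ideal `a* = 0 ⋉ a*`. -/
def idl : LieIdeal K (Tsd K a) where
  carrier := {p | pr1 p = 0}
  add_mem' := by intro p q (hp : pr1 p = 0) (hq : pr1 q = 0); show pr1 _ = 0; simp [hp, hq]
  zero_mem' := rfl
  smul_mem' := by intro t p (hp : pr1 p = 0); show pr1 _ = 0; simp [hp]
  lie_mem := by intro q p (hp : pr1 p = 0); show pr1 _ = 0; simp [hp]

lemma mem_idl {p : Tsd K a} : p ∈ (idl : LieIdeal K (Tsd K a)) ↔ pr1 p = 0 := Iff.rfl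

/-- The natural Lie algebra morphism `a → (a ⋉ a*) ⧸ a*`. -/
def φ : a →ₗ⁅K⁆ ((Tsd K a) ⧸ (idl : LieIdeal K (Tsd K a))) where
  toFun x := LieSubmodule.Quotient.mk (N := (idl : LieIdeal K (Tsd K a))) (mk x 0)
  map_add' x y := by
    rw [show (mk (x + y) 0 : Tsd K a) = mk x 0 + mk y 0 from ext' (by simp) (by simp)]
    exact Submodule.Quotient.mk_add _
  map_smul' t x := by
    rw [show (mk (t • x) 0 : Tsd K a) = t • mk x 0 from ext' (by simp) (by simp)]
    exact Submodule.Quotient.mk_smul (idl : LieIdeal K (Tsd K a)).toSubmodule t (mk x 0)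
  map_lie' {x y} := by
    rw [← LieSubmodule.Quotient.mk_bracket (idl : LieIdeal K (Tsd K a)) (mk x 0) (mk y 0)]
    congr 1
    refine ext' rfl ?_
    show (0 : Module.Dual K a) = cw x 0 - cw y 0
    ext w; simp

lemma φ_bijective : Function.Bijective (φ : a →ₗ⁅K⁆ ((Tsd K a) ⧸ (idl : LieIdeal K (Tsd K a)))) := by
  constructor
  · intro x y h
    have h2 : (mk x 0 - mk y 0 : Tsd K a) ∈ (idl : LieIdeal K (Tsd K a)).toSubmodule :=
      (Submodule.Quotient.eq _).mp h
    have : pr1 (mk x 0 - mk y 0 : Tsd K a) = 0 := h2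
    simpa [sub_eq_zero] using this
  · intro z
    obtain ⟨p, rfl⟩ := Submodule.Quotient.mk_surjective _ z
    refine ⟨pr1 p, ?_⟩
    show Submodule.Quotient.mk _ = _
    rw [Submodule.Quotient.eq]
    show pr1 (mk (pr1 p) 0 - p) = 0
    simp

end Tsd

lemma dual_skew {K : Type u} [Field K] {a : Type v} [LieRing a] [LieAlgebra K a]
    (f : Module.Dual K a) (x y : a) : f ⁅x, y⁆ = -f ⁅y, x⁆ := by
  rw [← lie_skew, map_neg]

theorem stmt_7 (K : Type u) [Field K] [CharZero K]
    (a : Type v) [LieRing a] [LieAlgebra K a] [Module.Finite K a] :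
    (∃ D : a →ₗ[K] a, Function.Bijective D ∧
      ∀ x y : a, D ⁅x, y⁆ = ⁅D x, y⁆ + ⁅x, D y⁆) ↔
    ∃ (g : Type (max u v)) (_ : LieRing g) (_ : LieAlgebra K g) (_ : Module.Finite K g)
      (B ω : LinearMap.BilinForm K g) (I : LieIdeal K g),
      B.Nondegenerate ∧ (∀ x y : g, B x y = B y x) ∧
      (∀ x y z : g, B ⁅x, y⁆ z = B x ⁅y, z⁆) ∧
      ω.Nondegenerate ∧ (∀ x : g, ω x x = 0) ∧
      (∀ x y z : g, ω ⁅x, y⁆ z + ω ⁅y, z⁆ x + ω ⁅z, x⁆ y = 0) ∧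
      (∀ x ∈ I, ∀ y ∈ I, B x y = 0) ∧
      (∀ x : g, x ∈ I ↔ ∀ u ∈ I, ω x u = 0) ∧
      Nonempty (a ≃ₗ⁅K⁆ (g ⧸ I)) := by
  constructor
  · rintro ⟨D, hD, hder⟩
    refine ⟨Tsd K a, inferInstance, inferInstance, inferInstance,
      Tsd.Bform, Tsd.ωform D, Tsd.idl, ?_, ?_, ?_, ?_, ?_, ?_, ?_, ?_,
      ⟨LieEquiv.ofBijective Tsd.φ Tsd.φ_bijective⟩⟩
    · -- B nondegenerate
      refine (LinearMap.IsRefl.nondegenerate_iff_separatingLeft (B := (Tsd.Bform : LinearMap.BilinForm K (Tsd K a))) (fun x y h => by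
        simp only [Tsd.Bform_apply] at h ⊢; linear_combination h)).mpr ?_
      intro p hp
      refine Tsd.ext' ?_ ?_
      · have := fun g => hp (Tsd.mk 0 g)
        simp only [Tsd.Bform_apply, Tsd.pr1_mk, Tsd.pr2_mk, map_zero, zero_add] at this
        simpa using (Module.forall_dual_apply_eq_zero_iff K (Tsd.pr1 p)).mp this
      · have := fun y => hp (Tsd.mk y 0)
        simp only [Tsd.Bform_apply, Tsd.pr1_mk, Tsd.pr2_mk, LinearMap.zero_apply,
          add_zero] at this
        simpa using LinearMap.ext this
    · -- B symmetric
      intro p q; simp only [Tsd.Bform_apply]; ring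
    · -- B invariant
      intro p q r
      simp only [Tsd.Bform_apply, Tsd.bracket_def, Tsd.pr1_mk, Tsd.pr2_mk,
        LinearMap.sub_apply, Tsd.cw_apply]
      rw [dual_skew (Tsd.pr2 r) (Tsd.pr1 q) (Tsd.pr1 p),
        dual_skew (Tsd.pr2 q) (Tsd.pr1 r) (Tsd.pr1 p)]
      ring
    · -- ω nondegenerate
      refine (LinearMap.IsRefl.nondegenerate_iff_separatingLeft (B := Tsd.ωform D) (fun x y h => by
        simp only [Tsd.ωform_apply] at h ⊢; linear_combination -h)).mpr ?_
      intro p hp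
      refine Tsd.ext' ?_ ?_
      · have := fun g => hp (Tsd.mk 0 g)
        simp only [Tsd.ωform_apply, Tsd.pr1_mk, Tsd.pr2_mk, map_zero, zero_sub,
          neg_eq_zero] at this
        have h0 : D (Tsd.pr1 p) = 0 :=
          (Module.forall_dual_apply_eq_zero_iff K (D (Tsd.pr1 p))).mp this
        have := hD.injective (by rw [h0, map_zero] : D (Tsd.pr1 p) = D 0)
        simpa using this
      · have := fun y => hp (Tsd.mk (hD.surjective y).choose 0)
        simp only [Tsd.ωform_apply, Tsd.pr1_mk, Tsd.pr2_mk, LinearMap.zero_apply,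
          sub_zero] at this
        refine LinearMap.ext fun y => ?_
        have h := this y
        rw [(hD.surjective y).choose_spec] at h
        simpa using h
    · -- ω alternating
      intro p; simp only [Tsd.ωform_apply, sub_self]
    · -- ω cocycle
      intro p q r
      simp only [Tsd.ωform_apply, Tsd.bracket_def, Tsd.pr1_mk, Tsd.pr2_mk,
        LinearMap.sub_apply, Tsd.cw_apply, hder, map_add]
      rw [dual_skew (Tsd.pr2 r) (D (Tsd.pr1 p)) (Tsd.pr1 q),
        dual_skew (Tsd.pr2 p) (D (Tsd.pr1 q)) (Tsd.pr1 r),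
        dual_skew (Tsd.pr2 q) (D (Tsd.pr1 r)) (Tsd.pr1 p)]
      ring
    · -- I isotropic for B
      intro p hp q hq
      rw [Tsd.mem_idl] at hp hq
      simp only [Tsd.Bform_apply, hp, hq, map_zero, add_zero]
    · -- I lagrangian for ω
      intro p
      rw [Tsd.mem_idl]
      constructor
      · intro hp u hu
        rw [Tsd.mem_idl] at hu
        simp only [Tsd.ωform_apply, hp, hu, map_zero, sub_zero, sub_self]
      · intro h
        have := fun g => h (Tsd.mk 0 g) (by rw [Tsd.mem_idl]; rfl)
        simp only [Tsd.ωform_apply, Tsd.pr1_mk, Tsd.pr2_mk, map_zero, zero_sub,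
          neg_eq_zero] at this
        have h0 : D (Tsd.pr1 p) = 0 :=
          (Module.forall_dual_apply_eq_zero_iff K (D (Tsd.pr1 p))).mp this
        have := hD.injective (by rw [h0, map_zero] : D (Tsd.pr1 p) = D 0)
        simpa using this
  · rintro ⟨g, _, _, _, B, ω, I, hBnd, hBsymm, hBinv, hωnd, hωalt, hωcyc, hiso, hlag, ⟨e⟩⟩
    have hωskew : ∀ x y : g, ω x y = -ω y x := by
      intro x y
      have h := hωalt (x + y)
      simp only [map_add, LinearMap.add_apply, hωalt] at h
      linear_combination h
    have hBrefl : B.IsRefl := fun x y h => by rw [hBsymm]; exact h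
    set D : g →ₗ[K] g := (B.toDual hBnd).symm.toLinearMap ∘ₗ ω with hDdef
    have hBD : ∀ x y, B (D x) y = ω x y := fun x y =>
      LinearMap.BilinForm.apply_toDual_symm_apply (hB := hBnd) (f := ω x) (v := y)
    have hDinj : Function.Injective D := by
      rw [← LinearMap.ker_eq_bot]
      refine (Submodule.eq_bot_iff _).mpr fun x hx => hωnd.1 x fun y => ?_
      rw [← hBD, LinearMap.mem_ker.mp hx]
      simp
    have hDsurj : Function.Surjective D := (LinearMap.injective_iff_surjective).mp hDinj
    have hDder : ∀ x y : g, D ⁅x, y⁆ = ⁅D x, y⁆ + ⁅x, D y⁆ := by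
      intro x y
      have key : ∀ z, B (D ⁅x, y⁆ - (⁅D x, y⁆ + ⁅x, D y⁆)) z = 0 := by
        intro z
        have hc := hωcyc x y z
        have h1 : ω ⁅y, z⁆ x = -B ⁅D x, y⁆ z := by
          rw [hωskew, ← hBD, ← hBinv]
        have h2 : ω ⁅z, x⁆ y = -B ⁅x, D y⁆ z := by
          rw [hωskew, ← hBD,
            show B ⁅x, D y⁆ z = B (D y) ⁅z, x⁆ from by rw [hBinv, hBsymm, hBinv]]
        rw [h1, h2] at hc
        have hω : ω ⁅x, y⁆ z = B (D ⁅x, y⁆) z := (hBD _ _).symm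
        rw [hω] at hc
        simp only [map_sub, map_add, LinearMap.sub_apply, LinearMap.add_apply]
        linear_combination hc
      have := hBnd.1 _ key
      rwa [sub_eq_zero] at this
    -- the ideal is stable under D
    set J : Submodule K g := I.toSubmodule with hJdef
    have hmemJ : ∀ x : g, x ∈ J ↔ x ∈ I := fun x => LieSubmodule.mem_toSubmodule I
    have hωI : ∀ (x : g) (u : g), ω x u = -B (D u) x := by
      intro x u; rw [hBD, ← hωskew]
    have hJeq : J = B.orthogonal (J.map D) := by
      ext x
      rw [LinearMap.BilinForm.mem_orthogonal_iff, hmemJ, hlag x]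
      constructor
      · rintro h n ⟨u, hu, rfl⟩
        have := h u (hmemJ u |>.mp hu)
        rw [hωI] at this
        show B (D u) x = 0
        linear_combination -this
      · intro h u hu
        rw [hωI]
        have h2 : B (D u) x = 0 := h (D u) ⟨u, (hmemJ u).mpr hu, rfl⟩
        rw [h2]
        ring
    have hfr_map : Module.finrank K (J.map D) = Module.finrank K J :=
      ((Submodule.equivMapOfInjective D hDinj J).finrank_eq).symm
    have hfr1 : Module.finrank K J = Module.finrank K g - Module.finrank K J := by
      conv_lhs => rw [hJeq]
      rw [LinearMap.BilinForm.finrank_orthogonal hBnd, hfr_map]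
    have hfrle : Module.finrank K J ≤ Module.finrank K g := J.finrank_le
    have hJiso : J ≤ B.orthogonal J := by
      intro y hy
      rw [LinearMap.BilinForm.mem_orthogonal_iff]
      intro n hn
      exact hiso n ((hmemJ n).mp hn) y ((hmemJ y).mp hy)
    have hJorth : J = B.orthogonal J := by
      refine Submodule.eq_of_le_of_finrank_le hJiso ?_
      rw [LinearMap.BilinForm.finrank_orthogonal hBnd]
      omega
    have hmapJ : J.map D = J := by
      have h := congrArg B.orthogonal hJeq
      rw [LinearMap.BilinForm.orthogonal_orthogonal hBnd hBrefl] at h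
      rw [← h, ← hJorth]
    -- descend D to the quotient
    have hle : J ≤ J.comap D := Submodule.map_le_iff_le_comap.mp (le_of_eq hmapJ)
    set Dq : (g ⧸ I) →ₗ[K] (g ⧸ I) := Submodule.mapQ J J D hle with hDqdef
    have hDq_mk : ∀ x : g, Dq (LieSubmodule.Quotient.mk (N := I) x)
        = LieSubmodule.Quotient.mk (N := I) (D x) := fun x => Submodule.mapQ_apply J J D x
    have hmk_surj : Function.Surjective (LieSubmodule.Quotient.mk (N := I) : g → g ⧸ I) :=
      Submodule.Quotient.mk_surjective J
    have hDq_surj : Function.Surjective Dq := by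
      intro z
      obtain ⟨y, rfl⟩ := hmk_surj z
      obtain ⟨x, rfl⟩ := hDsurj y
      exact ⟨LieSubmodule.Quotient.mk (N := I) x, hDq_mk x⟩
    have hDq_inj : Function.Injective Dq := (LinearMap.injective_iff_surjective).mpr hDq_surj
    have hDq_der : ∀ u v : g ⧸ I, Dq ⁅u, v⁆ = ⁅Dq u, v⁆ + ⁅u, Dq v⁆ := by
      intro u v
      obtain ⟨x, rfl⟩ := hmk_surj u
      obtain ⟨y, rfl⟩ := hmk_surj v
      rw [← LieSubmodule.Quotient.mk_bracket, hDq_mk, hDq_mk, hDq_mk,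
        ← LieSubmodule.Quotient.mk_bracket, ← LieSubmodule.Quotient.mk_bracket, hDder]
      exact Submodule.Quotient.mk_add J
    -- transport along e
    refine ⟨e.symm.toLieHom.toLinearMap ∘ₗ Dq ∘ₗ e.toLieHom.toLinearMap, ?_, ?_⟩
    · have hb : Function.Bijective Dq := ⟨hDq_inj, hDq_surj⟩
      have := (e.symm.bijective.comp hb).comp e.bijective
      exact this
    · intro x y
      have hcoe : ∀ w : a, (e.symm.toLieHom.toLinearMap ∘ₗ Dq ∘ₗ e.toLieHom.toLinearMap) w
          = e.symm (Dq (e w)) := fun _ => rfl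
      have hadd : ∀ u v : g ⧸ I, e.symm (u + v) = e.symm u + e.symm v := fun u v =>
        map_add e.symm.toLinearEquiv u v
      rw [hcoe, hcoe, hcoe, e.map_lie, hDq_der, hadd, e.symm.map_lie, e.symm.map_lie,
        e.symm_apply_apply, e.symm_apply_apply]
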